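/- In the singular twin group ST₃, the identity (s₁s₂)³ = (s₁s₂τ₂s₁)(s₂s₁τ₁s₂)⁻¹ holds. -/

import Mathlib

/-- Free-group letters for `ST₃`: `Sum.inl i` is `s_{i+1}`, `Sum.inr i` is `τ_{i+1}`. -/
abbrev STLetter := Fin 2 ⊕ Fin 2

def fs (i : Fin 2) : FreeGroup STLetter := FreeGroup.of (Sum.inl i)
def ft (i : Fin 2) : FreeGroup STLetter := FreeGroup.of (Sum.inr i)

/-- Relators of `ST₃`: `s₁² = s₂² = 1`, `τᵢsᵢ = sᵢτᵢ`, `s₁s₂τ₁ = τ₂s₁s₂`,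
`τ₁s₂s₁ = s₂s₁τ₂`. -/
def st3Rels : Set (FreeGroup STLetter) :=
  {fs 0 * fs 0, fs 1 * fs 1,
   ft 0 * fs 0 * (fs 0 * ft 0)⁻¹, ft 1 * fs 1 * (fs 1 * ft 1)⁻¹,
   fs 0 * fs 1 * ft 0 * (ft 1 * fs 0 * fs 1)⁻¹,
   ft 0 * fs 1 * fs 0 * (fs 1 * fs 0 * ft 1)⁻¹}

/-- The singular twin group `ST₃`. -/
def ST3 := PresentedGroup st3Rels

instance : Group ST3 := by unfold ST3; infer_instance

def s₁ : ST3 := PresentedGroup.of (Sum.inl 0)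
def s₂ : ST3 := PresentedGroup.of (Sum.inl 1)
def τ₁ : ST3 := PresentedGroup.of (Sum.inr 0)
def τ₂ : ST3 := PresentedGroup.of (Sum.inr 1)

lemma mk_eq_one {r : FreeGroup STLetter} (h : r ∈ st3Rels) :
    (QuotientGroup.mk r : PresentedGroup st3Rels) = 1 := by
  rw [QuotientGroup.eq_one_iff]
  exact Subgroup.subset_normalClosure h

lemma hs1 : s₁ * s₁ = 1 := by
  have := mk_eq_one (show fs 0 * fs 0 ∈ st3Rels from Or.inl rfl)
  have h2 : PresentedGroup.mk st3Rels (fs 0 * fs 0) = 1 := this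
  rw [map_mul] at h2
  exact h2

lemma hs2 : s₂ * s₂ = 1 := by
  have := mk_eq_one (show fs 1 * fs 1 ∈ st3Rels from Or.inr (Or.inl rfl))
  have h2 : PresentedGroup.mk st3Rels (fs 1 * fs 1) = 1 := this
  rw [map_mul] at h2
  exact h2

lemma hrel : s₁ * s₂ * τ₁ = τ₂ * s₁ * s₂ := by
  have := mk_eq_one
    (show fs 0 * fs 1 * ft 0 * (ft 1 * fs 0 * fs 1)⁻¹ ∈ st3Rels from
      Or.inr (Or.inr (Or.inr (Or.inr (Or.inl rfl)))))
  have h : (s₁ * s₂ * τ₁) * (τ₂ * s₁ * s₂)⁻¹ = 1 := by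
    have h2 : PresentedGroup.mk st3Rels
        (fs 0 * fs 1 * ft 0 * (ft 1 * fs 0 * fs 1)⁻¹) = 1 := this
    simp only [map_mul, map_inv] at h2
    exact h2
  exact mul_inv_eq_one.mp h

/-- in `ST₃`, the identity `(s₁s₂)³ = (s₁s₂τ₂s₁)(s₂s₁τ₁s₂)⁻¹` holds. -/
theorem stmt13 : (s₁ * s₂) ^ 3 = (s₁ * s₂ * τ₂ * s₁) * (s₂ * s₁ * τ₁ * s₂)⁻¹ := by
  have hi1 : s₁⁻¹ = s₁ := inv_eq_of_mul_eq_one_right hs1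
  have hi2 : s₂⁻¹ = s₂ := inv_eq_of_mul_eq_one_right hs2
  have hτ : τ₂ = s₁ * s₂ * τ₁ * s₂ * s₁ := by
    rw [hrel]
    simp [mul_assoc, hs1, hs2]
  have hs1' : ∀ x : ST3, s₁ * (s₁ * x) = x := by
    intro x; rw [← mul_assoc, hs1, one_mul]
  have hs2' : ∀ x : ST3, s₂ * (s₂ * x) = x := by
    intro x; rw [← mul_assoc, hs2, one_mul]
  simp [pow_succ, hτ, mul_inv_rev, hi1, hi2, mul_assoc, hs1', hs2']
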